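/- arXiv:2011.06484 — 3 statements merged into one kernel-verified Lean document; each statement's English description precedes it below -/
import Mathlib

section
/- Let M be an n×n complex Hermitian matrix, ḡ ∈ ℂ^n, c ∈ ℝ, and ε > 0. Then the following are equivalent: (i) for every δ ∈ ℂ^n with ‖δ‖_2 ≤ ε one has δ^H M δ + 2 Re(ḡ^H M δ) + ḡ^H M ḡ + c ≤ 0; (ii) there exists a real number q ≥ 0 such that the (n+1)×(n+1) Hermitian matrix P − G^H M G is positive semidefinite, where P is the block-diagonal matrix with top-left block q·I_n and bottom-right scalar entry −q ε² − c, and G = [I_n, ḡ] is the n×(n+1) matrix obtained by appending the column ḡ to the n×n identity matrix. -/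
open ComplexOrder Matrix

namespace SLemAux

variable {m : Type*} [Fintype m]

noncomputable def qf (A : Matrix m m ℂ) (x : m → ℂ) : ℝ := (star x ⬝ᵥ A *ᵥ x).re

lemma herm_conj {A : Matrix m m ℂ} (hA : A.IsHermitian) (x y : m → ℂ) :
    star y ⬝ᵥ A *ᵥ x = star (star x ⬝ᵥ A *ᵥ y) := by
  rw [star_dotProduct]
  congr 1
  rw [star_mulVec, ← dotProduct_mulVec, hA.eq]

lemma star_mul_self_c (p : ℂ) : star p * p = ((‖p‖ ^ 2 : ℝ) : ℂ) := by
  simpa using RCLike.conj_mul p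

lemma qf_combo {A : Matrix m m ℂ} (hA : A.IsHermitian) (x y : m → ℂ) (p w : ℂ) :
    qf A (p • x + w • y) =
      ‖p‖ ^ 2 * qf A x + ‖w‖ ^ 2 * qf A y + 2 * ((star p * w) * (star x ⬝ᵥ A *ᵥ y)).re := by
  have expand : star (p • x + w • y) ⬝ᵥ A *ᵥ (p • x + w • y)
      = (star p * p) * (star x ⬝ᵥ A *ᵥ x) + (star w * w) * (star y ⬝ᵥ A *ᵥ y)
        + ((star p * w) * (star x ⬝ᵥ A *ᵥ y) + (star w * p) * (star y ⬝ᵥ A *ᵥ x)) := by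
    simp only [star_add, star_smul, mulVec_add, mulVec_smul, dotProduct_add, add_dotProduct,
      dotProduct_smul, smul_dotProduct, smul_eq_mul]
    ring
  have hc : (star w * p) * (star y ⬝ᵥ A *ᵥ x) = star ((star p * w) * (star x ⬝ᵥ A *ᵥ y)) := by
    rw [herm_conj hA x y]
    simp only [star_mul', star_star]
    ring
  rw [qf, expand, hc, star_mul_self_c, star_mul_self_c]
  simp only [Complex.add_re, Complex.re_ofReal_mul, Complex.star_def, Complex.conj_re]
  rw [qf, qf]
  ring

lemma qf_smul {A : Matrix m m ℂ} (s : ℂ) (x : m → ℂ) : qf A (s • x) = ‖s‖ ^ 2 * qf A x := by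
  rw [qf, qf, star_smul, mulVec_smul, dotProduct_smul, smul_dotProduct, smul_eq_mul, smul_eq_mul,
    ← mul_assoc, mul_comm s (star s), star_mul_self_c, Complex.re_ofReal_mul]

lemma qf_zero (A : Matrix m m ℂ) : qf A 0 = 0 := by simp [qf]

/-- phase choice -/
lemma exists_phase (β γ : ℂ) : ∃ u : ℂ, ‖u‖ = 1 ∧ (u * β).re ≤ 0 ∧ 0 ≤ (u * γ).re := by
  by_cases hβ : β = 0
  · by_cases hγ : γ = 0
    · exact ⟨1, by simp [hβ, hγ]⟩
    · refine ⟨star γ / ‖γ‖, ?_, by simp [hβ], ?_⟩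
      · rw [norm_div, norm_star, Complex.norm_real, norm_norm]
        exact div_self (norm_ne_zero_iff.mpr hγ)
      · rw [div_mul_eq_mul_div, star_mul_self_c]
        have : ((‖γ‖ ^ 2 : ℝ) : ℂ) / ((‖γ‖ : ℝ) : ℂ) = ((‖γ‖ ^ 2 / ‖γ‖ : ℝ) : ℂ) := by
          push_cast; ring
        rw [this, Complex.ofReal_re]
        positivity
  · set u₁ : ℂ := Complex.I * star β / ‖β‖ with hu₁
    have hre : (u₁ * β).re = 0 := by
      rw [hu₁, div_mul_eq_mul_div, mul_assoc, star_mul_self_c]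
      have h2 : Complex.I * ((‖β‖ ^ 2 : ℝ) : ℂ) / ((‖β‖ : ℝ) : ℂ)
          = Complex.I * ((‖β‖ ^ 2 / ‖β‖ : ℝ) : ℂ) := by push_cast; ring
      rw [h2]
      generalize (‖β‖ ^ 2 / ‖β‖ : ℝ) = r
      simp [Complex.mul_re]
    have hnorm : ‖u₁‖ = 1 := by
      rw [hu₁, norm_div, norm_mul, Complex.norm_I, one_mul, norm_star, Complex.norm_real, norm_norm]
      exact div_self (norm_ne_zero_iff.mpr hβ)
    by_cases hsign : 0 ≤ (u₁ * γ).re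
    · exact ⟨u₁, hnorm, le_of_eq hre, hsign⟩
    · refine ⟨-u₁, by simp [hnorm], by simp [hre], ?_⟩
      have : (-u₁ * γ).re = -((u₁ * γ).re) := by simp
      rw [this]
      linarith


lemma key {A D : Matrix m m ℂ} (hA : A.IsHermitian) (hD : D.IsHermitian)
    (h : ∀ z, qf D z ≤ 0 → qf A z ≤ 0) {x y : m → ℂ}
    (hx : 0 < qf D x) (hy : qf D y < 0) :
    (-qf D y) * qf A x + qf D x * qf A y ≤ 0 := by
  set a := qf D x with ha
  set b := -qf D y with hb
  have ha' : 0 < a := hx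
  have hb' : 0 < b := by rw [hb]; linarith
  set sa := Real.sqrt a with hsa'
  set sb := Real.sqrt b with hsb'
  obtain ⟨u, hu1, huD, huA⟩ := exists_phase (((sb * sa : ℝ) : ℂ) * (star x ⬝ᵥ D *ᵥ y))
    (((sb * sa : ℝ) : ℂ) * (star x ⬝ᵥ A *ᵥ y))
  have hsb : ‖((sb : ℝ) : ℂ)‖ ^ 2 = b := by
    rw [Complex.norm_real, Real.norm_eq_abs, sq_abs, hsb', Real.sq_sqrt hb'.le]
  have hsa : ‖(((sa : ℝ) : ℂ) * u)‖ ^ 2 = a := by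
    rw [norm_mul, hu1, mul_one, Complex.norm_real, Real.norm_eq_abs, sq_abs, hsa',
      Real.sq_sqrt ha'.le]
  have hcoef : star ((sb : ℝ) : ℂ) * (((sa : ℝ) : ℂ) * u) = u * ((sb * sa : ℝ) : ℂ) := by
    rw [Complex.star_def, Complex.conj_ofReal]
    push_cast
    ring
  have hDz : qf D (((sb : ℝ) : ℂ) • x + ((((sa : ℝ) : ℂ)) * u) • y) ≤ 0 := by
    rw [qf_combo hD x y, hsb, hsa, hcoef, mul_assoc]
    have h0 : b * qf D x + a * qf D y = 0 := by rw [ha, hb]; ring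
    linarith [huD]
  have hAz := h _ hDz
  rw [qf_combo hA x y, hsb, hsa, hcoef, mul_assoc] at hAz
  linarith [huA]

theorem s_lemma {A D : Matrix m m ℂ} (hA : A.IsHermitian) (hD : D.IsHermitian)
    (h : ∀ z, qf D z ≤ 0 → qf A z ≤ 0) {y₀ : m → ℂ} (hy₀ : qf D y₀ < 0) :
    ∃ q : ℝ, 0 ≤ q ∧ ∀ x, qf A x ≤ q * qf D x := by
  set S : Set ℝ := {r | ∃ x, 0 < qf D x ∧ r = qf A x / qf D x} with hS
  have ub : ∀ y, qf D y < 0 → ∀ r ∈ S, r ≤ qf A y / qf D y := by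
    rintro y hy r ⟨x, hx, rfl⟩
    have hk := key hA hD h hx hy
    rw [show qf A y / qf D y = -qf A y / -qf D y from (neg_div_neg_eq _ _).symm,
      div_le_div_iff₀ hx (neg_pos.mpr hy)]
    nlinarith [hk]
  have hbdd : BddAbove S := ⟨qf A y₀ / qf D y₀, fun r hr => ub y₀ hy₀ r hr⟩
  refine ⟨max 0 (sSup S), le_max_left _ _, fun x => ?_⟩
  rcases lt_trichotomy (qf D x) 0 with hneg | hzero | hpos
  · have hx0 : qf A x ≤ 0 := h x hneg.le
    have hr : 0 ≤ qf A x / qf D x := div_nonneg_iff.mpr (Or.inr ⟨hx0, hneg.le⟩)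
    have hs : sSup S ≤ qf A x / qf D x := Real.sSup_le (ub x hneg) hr
    have hq : max 0 (sSup S) ≤ qf A x / qf D x := max_le hr hs
    calc qf A x = (qf A x / qf D x) * qf D x := (div_mul_cancel₀ _ hneg.ne).symm
    _ ≤ max 0 (sSup S) * qf D x := mul_le_mul_of_nonpos_right hq hneg.le
  · rw [hzero, mul_zero]
    exact h x hzero.le
  · have hmem : qf A x / qf D x ∈ S := ⟨x, hpos, rfl⟩
    have hq : qf A x / qf D x ≤ max 0 (sSup S) :=
      (le_csSup hbdd hmem).trans (le_max_right _ _)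
    rw [div_le_iff₀ hpos] at hq
    linarith [hq]


lemma posSemidef_of_qf {N : Matrix m m ℂ} (hN : N.IsHermitian) (h : ∀ x, 0 ≤ qf N x) :
    N.PosSemidef := by
  refine Matrix.PosSemidef.of_dotProduct_mulVec_nonneg hN fun x => ?_
  rw [Complex.nonneg_iff]
  refine ⟨h x, ?_⟩
  have him := congrArg Complex.im (herm_conj hN x x)
  simp only [Complex.star_def, Complex.conj_im] at him
  linarith [him]

lemma qf_add_mat (A₁ A₂ : Matrix m m ℂ) (x : m → ℂ) :
    qf (A₁ + A₂) x = qf A₁ x + qf A₂ x := by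
  simp [qf, add_mulVec, dotProduct_add]

lemma qf_sub_mat (A₁ A₂ : Matrix m m ℂ) (x : m → ℂ) :
    qf (A₁ - A₂) x = qf A₁ x - qf A₂ x := by
  simp [qf, sub_mulVec, dotProduct_sub]

lemma qf_real_smul (r : ℝ) (A : Matrix m m ℂ) (x : m → ℂ) :
    qf (((r : ℝ) : ℂ) • A) x = r * qf A x := by
  rw [qf, qf, smul_mulVec, dotProduct_smul, smul_eq_mul, Complex.re_ofReal_mul]

lemma qf_add_aff {A : Matrix m m ℂ} (hA : A.IsHermitian) (δ g : m → ℂ) :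
    qf A (δ + g) = qf A δ + 2 * (star g ⬝ᵥ A *ᵥ δ).re + qf A g := by
  have h := qf_combo hA δ g 1 1
  simp only [one_smul, norm_one, one_pow, one_mul, star_one, mul_one] at h
  have h2 : (star δ ⬝ᵥ A *ᵥ g).re = (star g ⬝ᵥ A *ᵥ δ).re := by
    rw [herm_conj hA g δ]
    simp [Complex.star_def]
  rw [h, h2]
  ring

lemma qf_blkdiag {k : Type*} [Fintype k] (P : Matrix m m ℂ) (R : Matrix k k ℂ)
    (x : m ⊕ k → ℂ) :
    qf (fromBlocks P 0 0 R) x = qf P (x ∘ Sum.inl) + qf R (x ∘ Sum.inr) := by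
  unfold qf
  nth_rewrite 1 [← Sum.elim_comp_inl_inr x]
  rw [fromBlocks_mulVec]
  simp only [Sum.elim_comp_inl, Sum.elim_comp_inr, zero_mulVec, add_zero, zero_add,
    Function.star_sumElim, sumElim_dotProduct_sumElim, Complex.add_re]

lemma qf_one [DecidableEq m] (v : m → ℂ) : qf 1 v = ∑ i, ‖v i‖ ^ 2 := by
  unfold qf
  rw [one_mulVec]
  simp only [dotProduct, Pi.star_apply, Complex.re_sum]
  exact Finset.sum_congr rfl fun i _ => by rw [star_mul_self_c, Complex.ofReal_re]

lemma qf_unit_const (r : ℝ) (τ : Unit → ℂ) :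
    qf (Matrix.of (fun _ _ : Unit => ((r : ℝ) : ℂ))) τ = r * ‖τ ()‖ ^ 2 := by
  unfold qf
  have h1 : (Matrix.of (fun _ _ : Unit => ((r : ℝ) : ℂ))) *ᵥ τ = fun _ => (r : ℂ) * τ () := by
    ext u
    simp [mulVec, dotProduct]
  rw [h1]
  have h2 : star τ ⬝ᵥ (fun _ => (r : ℂ) * τ ()) = star (τ ()) * ((r : ℂ) * τ ()) := by
    simp [dotProduct]
  rw [h2]
  have h3 : star (τ ()) * ((r : ℂ) * τ ()) = (r : ℂ) * ((‖τ ()‖ ^ 2 : ℝ) : ℂ) := by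
    rw [← star_mul_self_c]
    ring
  rw [h3, ← Complex.ofReal_mul, Complex.ofReal_re]

lemma qf_conj {m' : Type*} [Fintype m'] (M : Matrix m' m' ℂ) (B : Matrix m' m ℂ) (x : m → ℂ) :
    qf (Bᴴ * M * B) x = (star (B *ᵥ x) ⬝ᵥ M *ᵥ (B *ᵥ x)).re := by
  unfold qf
  congr 1
  rw [star_mulVec, ← dotProduct_mulVec, mulVec_mulVec, mulVec_mulVec]

end SLemAux

open SLemAux

/-- Robust quadratic constraint as an LMI: for Hermitian `M`, `g ∈ ℂⁿ`, `c ∈ ℝ`, `ε > 0`,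
`δᴴ M δ + 2 Re(gᴴ M δ) + gᴴ M g + c ≤ 0` holds for all `‖δ‖₂ ≤ ε` iff there exists
`q ≥ 0` such that `P - Gᴴ M G ⪰ 0`, where `P = blkdiag(q Iₙ, -qε² - c)` and `G = [Iₙ, g]`. -/
theorem robust_quadratic_constraint_iff_LMI
    {n : ℕ} (M : Matrix (Fin n) (Fin n) ℂ) (hM : M.IsHermitian)
    (g : Fin n → ℂ) (c ε : ℝ) (hε : 0 < ε) :
    (∀ δ : Fin n → ℂ, Real.sqrt (∑ i, ‖δ i‖ ^ 2) ≤ ε →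
        (star δ ⬝ᵥ M.mulVec δ).re + 2 * (star g ⬝ᵥ M.mulVec δ).re +
            (star g ⬝ᵥ M.mulVec g).re + c ≤ 0) ↔
      ∃ q : ℝ, 0 ≤ q ∧
        (Matrix.fromBlocks ((q : ℂ) • (1 : Matrix (Fin n) (Fin n) ℂ)) 0 0
              (Matrix.of fun (_ _ : Unit) => ((-(q * ε ^ 2) - c : ℝ) : ℂ)) -
          (Matrix.fromCols (1 : Matrix (Fin n) (Fin n) ℂ)
                (Matrix.of fun i (_ : Unit) => g i))ᴴ * M *
            Matrix.fromCols (1 : Matrix (Fin n) (Fin n) ℂ)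
              (Matrix.of fun i (_ : Unit) => g i)).PosSemidef := by
  classical
  set G : Matrix (Fin n) (Fin n ⊕ Unit) ℂ :=
    Matrix.fromCols 1 (Matrix.of fun i (_ : Unit) => g i) with hGdef
  set E : Matrix (Fin n ⊕ Unit) (Fin n ⊕ Unit) ℂ :=
    Matrix.fromBlocks 0 0 0 (Matrix.of fun _ _ => ((c : ℝ) : ℂ)) with hEdef
  set D : Matrix (Fin n ⊕ Unit) (Fin n ⊕ Unit) ℂ :=
    Matrix.fromBlocks 1 0 0 (Matrix.of fun _ _ => ((-(ε ^ 2) : ℝ) : ℂ)) with hDdef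
  set A : Matrix (Fin n ⊕ Unit) (Fin n ⊕ Unit) ℂ := Gᴴ * M * G + E with hAdef
  have hEh : E.IsHermitian := by
    rw [hEdef, isHermitian_fromBlocks_iff]
    refine ⟨isHermitian_zero, by simp, by simp, ?_⟩
    ext i j
    simp [conjTranspose_apply]
  have hAh : A.IsHermitian := (isHermitian_conjTranspose_mul_mul G hM).add hEh
  have hDh : D.IsHermitian := by
    rw [hDdef, isHermitian_fromBlocks_iff]
    refine ⟨isHermitian_one, by simp, by simp, ?_⟩
    ext i j
    simp [conjTranspose_apply]
  -- mulVec of G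
  have hGmul : ∀ x : (Fin n ⊕ Unit) → ℂ,
      G *ᵥ x = (x ∘ Sum.inl) + x (Sum.inr ()) • g := by
    intro x
    rw [hGdef]
    nth_rewrite 1 [← Sum.elim_comp_inl_inr x]
    rw [fromCols_mulVec_sumElim, one_mulVec]
    congr 1
    ext i
    simp [mulVec, dotProduct, mul_comm]
  have hqfA : ∀ x : (Fin n ⊕ Unit) → ℂ,
      qf A x = (star ((x ∘ Sum.inl) + x (Sum.inr ()) • g) ⬝ᵥ
          M *ᵥ ((x ∘ Sum.inl) + x (Sum.inr ()) • g)).re + c * ‖x (Sum.inr ())‖ ^ 2 := by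
    intro x
    rw [hAdef, qf_add_mat, qf_conj, hGmul x, hEdef, qf_blkdiag, qf_unit_const]
    simp [qf]
  have hqfD : ∀ x : (Fin n ⊕ Unit) → ℂ,
      qf D x = (∑ i, ‖x (Sum.inl i)‖ ^ 2) - ε ^ 2 * ‖x (Sum.inr ())‖ ^ 2 := by
    intro x
    rw [hDdef, qf_blkdiag, qf_one, qf_unit_const]
    simp only [Function.comp_apply]
    ring
  -- matrix identity
  have hmx : ∀ q : ℝ,
      Matrix.fromBlocks ((q : ℂ) • (1 : Matrix (Fin n) (Fin n) ℂ)) 0 0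
          (Matrix.of fun (_ _ : Unit) => ((-(q * ε ^ 2) - c : ℝ) : ℂ)) - Gᴴ * M * G
        = ((q : ℝ) : ℂ) • D - A := by
    intro q
    rw [hAdef]
    have : Matrix.fromBlocks ((q : ℂ) • (1 : Matrix (Fin n) (Fin n) ℂ)) 0 0
        (Matrix.of fun (_ _ : Unit) => ((-(q * ε ^ 2) - c : ℝ) : ℂ))
        = ((q : ℝ) : ℂ) • D - E := by
      rw [hDdef, hEdef]
      ext i j
      rcases i with i | i <;> rcases j with j | j <;>
        simp [Matrix.fromBlocks, Matrix.sub_apply, Matrix.smul_apply, Matrix.one_apply,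
          smul_eq_mul] <;> push_cast <;> ring
    rw [this]
    abel
  constructor
  · intro H
    have hy₀ : qf D (Sum.elim (0 : Fin n → ℂ) (fun _ => (1 : ℂ))) < 0 := by
      rw [hqfD]
      simp
      positivity
    have himp : ∀ z, qf D z ≤ 0 → qf A z ≤ 0 := by
      intro z hz
      rw [hqfD] at hz
      by_cases ht : z (Sum.inr ()) = 0
      · rw [hqfA]
        have hsum : ∑ i, ‖z (Sum.inl i)‖ ^ 2 ≤ 0 := by
          rw [ht] at hz
          simpa using hz
        have hδ : ∀ i ∈ Finset.univ, ‖z (Sum.inl i)‖ ^ 2 = 0 := by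
          rw [← Finset.sum_eq_zero_iff_of_nonneg (fun i _ => by positivity)]
          exact le_antisymm hsum (Finset.sum_nonneg fun i _ => by positivity)
        have hz0 : (z ∘ Sum.inl) + z (Sum.inr ()) • g = 0 := by
          funext i
          have := hδ i (Finset.mem_univ i)
          have hzi : z (Sum.inl i) = 0 := by
            rwa [pow_eq_zero_iff (two_ne_zero), norm_eq_zero] at this
          simp [ht, hzi]
        rw [hz0]
        simp [ht]
      · set t := z (Sum.inr ()) with htdef
        have hz' : z = t • (t⁻¹ • z) := by
          rw [smul_smul, mul_inv_cancel₀ ht, one_smul]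
        have hq1 : qf A z = ‖t‖ ^ 2 * qf A (t⁻¹ • z) := by
          nth_rewrite 1 [hz']
          rw [qf_smul]
        have hcomp1 : (t⁻¹ • z) ∘ Sum.inl = t⁻¹ • (z ∘ Sum.inl) := rfl
        have hcomp2 : (t⁻¹ • z) (Sum.inr ()) = 1 := by
          simp only [Pi.smul_apply, smul_eq_mul, ← htdef]
          exact inv_mul_cancel₀ ht
        have hbound : Real.sqrt (∑ i, ‖(t⁻¹ • (z ∘ Sum.inl)) i‖ ^ 2) ≤ ε := by
          have hsum : ∑ i, ‖(t⁻¹ • (z ∘ Sum.inl)) i‖ ^ 2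
              = ‖t‖⁻¹ ^ 2 * ∑ i, ‖z (Sum.inl i)‖ ^ 2 := by
            rw [Finset.mul_sum]
            refine Finset.sum_congr rfl fun i _ => ?_
            simp [norm_smul, mul_pow]
          have htpos : 0 < ‖t‖ := norm_pos_iff.mpr ht
          have hle : ∑ i, ‖(t⁻¹ • (z ∘ Sum.inl)) i‖ ^ 2 ≤ ε ^ 2 := by
            rw [hsum]
            rw [inv_pow]
            rw [inv_mul_le_iff₀ (by positivity)]
            nlinarith [hz]
          calc Real.sqrt (∑ i, ‖(t⁻¹ • (z ∘ Sum.inl)) i‖ ^ 2)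
              ≤ Real.sqrt (ε ^ 2) := Real.sqrt_le_sqrt hle
            _ = ε := Real.sqrt_sq hε.le
        have hH := H (t⁻¹ • (z ∘ Sum.inl)) hbound
        have hq2 : qf A (t⁻¹ • z) ≤ 0 := by
          rw [hqfA, hcomp1, hcomp2, one_smul]
          have hexp := qf_add_aff hM (t⁻¹ • (z ∘ Sum.inl)) g
          rw [qf, qf] at hexp
          simp only [norm_one, one_pow, mul_one]
          rw [hexp]
          rw [qf] at hexp ⊢
          linarith [hH]
        rw [hq1]
        have : 0 ≤ ‖t‖ ^ 2 := by positivity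
        exact mul_nonpos_of_nonneg_of_nonpos this hq2
    obtain ⟨q, hq0, hq⟩ := s_lemma hAh hDh himp hy₀
    refine ⟨q, hq0, ?_⟩
    rw [hmx q]
    have hherm : (((q : ℝ) : ℂ) • D - A).IsHermitian := by
      refine IsHermitian.sub ?_ hAh
      rw [IsHermitian, conjTranspose_smul, hDh.eq, Complex.star_def, Complex.conj_ofReal]
    refine posSemidef_of_qf hherm fun x => ?_
    rw [qf_sub_mat, qf_real_smul]
    linarith [hq x]
  · rintro ⟨q, hq0, hpsd⟩ δ hδ
    rw [hmx q] at hpsd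
    set x : (Fin n ⊕ Unit) → ℂ := Sum.elim δ (fun _ => (1 : ℂ)) with hxdef
    have hre : 0 ≤ qf (((q : ℝ) : ℂ) • D - A) x := (Complex.nonneg_iff.mp (hpsd.dotProduct_mulVec_nonneg x)).1
    rw [qf_sub_mat, qf_real_smul] at hre
    have hxl : x ∘ Sum.inl = δ := rfl
    have hxr : x (Sum.inr ()) = 1 := rfl
    have hDx : qf D x ≤ 0 := by
      rw [hqfD]
      simp only [hxdef, Sum.elim_inl, Sum.elim_inr, norm_one, one_pow, mul_one]
      have hsum : ∑ i, ‖δ i‖ ^ 2 ≤ ε ^ 2 := by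
        have h1 : 0 ≤ ∑ i, ‖δ i‖ ^ 2 := Finset.sum_nonneg fun i _ => by positivity
        have := Real.sq_sqrt h1
        nlinarith [hδ, Real.sqrt_nonneg (∑ i, ‖δ i‖ ^ 2)]
      linarith [hsum]
    have hAx : qf A x ≤ 0 := by
      have h1 : q * qf D x ≤ 0 := mul_nonpos_of_nonneg_of_nonpos hq0 hDx
      linarith [hre]
    rw [hqfA, hxl, hxr, one_smul] at hAx
    have hexp := qf_add_aff hM δ g
    rw [qf, qf, qf] at hexp
    simp only [norm_one, one_pow, mul_one] at hAx
    rw [hexp] at hAx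
    linarith [hAx]
end

section
/- (Validity of the inner approximation of the QoS constraint.) Let W̃ and W̃⁰ be n×n complex Hermitian matrices, let V and V⁰ be m×m complex Hermitian matrices, let H be an n×m complex matrix, and let c ∈ ℝ. If (1/2)‖W̃ + H V H^H‖_F² − Re Tr(H^H H V⁰ H^H H V) − Re Tr(W̃⁰ W̃) + c + (1/2)‖H V⁰ H^H‖_F² + (1/2)‖W̃⁰‖_F² ≤ 0, then c + Re Tr(V H^H W̃ H) ≤ 0. That is, the first-order convexified constraint implies the original difference-of-convex constraint. -/
open Matrix

/-- The Frobenius norm of a complex matrix. -/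
noncomputable def frobNorm {α β : Type*} [Fintype α] [Fintype β]
    (X : Matrix α β ℂ) : ℝ :=
  Real.sqrt (∑ i, ∑ j, ‖X i j‖ ^ 2)


lemma frob_sq {α β : Type*} [Fintype α] [Fintype β] (X : Matrix α β ℂ) :
    frobNorm X ^ 2 = ((Xᴴ * X).trace).re := by
  have ht : (Xᴴ * X).trace = ∑ j, ∑ i, ((‖X i j‖ ^ 2 : ℝ) : ℂ) := by
    rw [Matrix.trace]
    refine Finset.sum_congr rfl fun j _ => ?_
    rw [Matrix.diag_apply, Matrix.mul_apply]
    refine Finset.sum_congr rfl fun i _ => ?_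
    rw [Matrix.conjTranspose_apply, mul_comm]
    simp [Complex.mul_conj, Complex.normSq_eq_norm_sq]
  rw [frobNorm, Real.sq_sqrt (by positivity), ht]
  rw [Finset.sum_comm]
  simp only [Complex.re_sum, Complex.ofReal_re]

lemma re_trace_nonneg {α β : Type*} [Fintype α] [Fintype β] (X : Matrix α β ℂ) :
    0 ≤ ((Xᴴ * X).trace).re := by
  rw [← frob_sq]; positivity

/-- Validity of the inner approximation of the QoS constraint: the first-order
convexified constraint implies the original difference-of-convex constraint
`c + Re Tr(V Hᴴ W̃ H) ≤ 0`. -/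
theorem inner_approximation_implies_qos
    {n m : ℕ} (W W₀ : Matrix (Fin n) (Fin n) ℂ)
    (hW : W.IsHermitian) (hW₀ : W₀.IsHermitian)
    (V V₀ : Matrix (Fin m) (Fin m) ℂ)
    (hV : V.IsHermitian) (hV₀ : V₀.IsHermitian)
    (H : Matrix (Fin n) (Fin m) ℂ) (c : ℝ)
    (h : (1 / 2) * frobNorm (W + H * V * Hᴴ) ^ 2 -
          ((Hᴴ * H * V₀ * Hᴴ * H * V).trace).re - ((W₀ * W).trace).re + c +
          (1 / 2) * frobNorm (H * V₀ * Hᴴ) ^ 2 + (1 / 2) * frobNorm W₀ ^ 2 ≤ 0) :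
    c + ((V * Hᴴ * W * H).trace).re ≤ 0 := by
  have key : ((W + H * V * Hᴴ)ᴴ * (W + H * V * Hᴴ)).trace
      + ((H * V₀ * Hᴴ)ᴴ * (H * V₀ * Hᴴ)).trace + (W₀ᴴ * W₀).trace
      - 2 * (Hᴴ * H * V₀ * Hᴴ * H * V).trace - 2 * (W₀ * W).trace
      = 2 * (V * Hᴴ * W * H).trace
        + ((W - W₀)ᴴ * (W - W₀)).trace
        + ((H * V * Hᴴ - H * V₀ * Hᴴ)ᴴ * (H * V * Hᴴ - H * V₀ * Hᴴ)).trace := by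
    have c1 := trace_mul_comm (W * H) (V * Hᴴ)
    have c2 := trace_mul_comm H (V * (Hᴴ * W))
    have c3 := trace_mul_comm Hᴴ (H * (V₀ * (Hᴴ * (H * V))))
    have c4 := trace_mul_comm (H * V * Hᴴ) (H * V₀ * Hᴴ)
    have c5 := trace_mul_comm W₀ W
    simp only [Matrix.mul_assoc] at c1 c2 c3 c4 c5
    simp only [conjTranspose_add, conjTranspose_sub, conjTranspose_mul,
      conjTranspose_conjTranspose, hW.eq, hW₀.eq, hV.eq, hV₀.eq,
      Matrix.add_mul, Matrix.mul_add, Matrix.sub_mul, Matrix.mul_sub,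
      trace_add, trace_sub, Matrix.mul_assoc]
    ring_nf
    linear_combination c1 + c2 - 2*c3 + c4 - c5
  have key' := congrArg Complex.re key
  simp only [Complex.add_re, Complex.sub_re, Complex.mul_re, Complex.re_ofNat,
    Complex.im_ofNat, zero_mul, sub_zero] at key'
  have h1 := re_trace_nonneg (W - W₀)
  have h2 := re_trace_nonneg (H * V * Hᴴ - H * V₀ * Hᴴ)
  rw [frob_sq, frob_sq, frob_sq] at h
  linarith
end

section
/- (Validity of the linearized rank-one constraint.) Let V and V⁰ be m×m complex positive semidefinite Hermitian matrices, and let u ∈ ℂ^m be a unit-norm eigenvector of V⁰ associated with its largest eigenvalue λmax(V⁰). If Tr(V) − λmax(V⁰) − Re(u^H (V − V⁰) u) ≤ 0, then rank(V) ≤ 1. -/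
open ComplexOrder Matrix

private lemma mul_star_self_eq (z : ℂ) : z * star z = ((‖z‖ ^ 2 : ℝ) : ℂ) := by
  rw [show star z = (starRingEnd ℂ) z from rfl, Complex.mul_conj']
  norm_cast

private lemma dot_aux {n : ℕ} (M : Matrix (Fin n) (Fin n) ℂ) (u x : Fin n → ℂ) :
    star u ⬝ᵥ (M *ᵥ x) = star (star M *ᵥ u) ⬝ᵥ x := by
  rw [Matrix.dotProduct_mulVec, Matrix.star_mulVec, ← Matrix.star_eq_conjTranspose, star_star]

private lemma dot_self_eq {n : ℕ} (v : Fin n → ℂ) :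
    star v ⬝ᵥ v = ((∑ i, ‖v i‖ ^ 2 : ℝ) : ℂ) := by
  rw [dotProduct, Complex.ofReal_sum]
  refine Finset.sum_congr rfl fun i _ => ?_
  rw [Pi.star_apply, mul_comm, mul_star_self_eq]

/-- Validity of the linearized rank-one constraint: for PSD matrices `V`, `V₀` and a
unit-norm eigenvector `u` of `V₀` for its largest eigenvalue, if
`Tr V - λmax V₀ - Re(uᴴ (V - V₀) u) ≤ 0` then `rank V ≤ 1`. -/
theorem rank_le_one_of_linearized_constraint
    {m : ℕ} (hm : 0 < m) (V V₀ : Matrix (Fin m) (Fin m) ℂ)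
    (hV : V.PosSemidef) (hV₀ : V₀.PosSemidef) (u : Fin m → ℂ)
    (hu_eig : V₀.mulVec u =
      ((Finset.univ.sup' ⟨⟨0, hm⟩, Finset.mem_univ _⟩ hV₀.1.eigenvalues : ℝ) : ℂ) • u)
    (hu_norm : Real.sqrt (∑ i, ‖u i‖ ^ 2) = 1)
    (h : (V.trace).re -
          Finset.univ.sup' ⟨⟨0, hm⟩, Finset.mem_univ _⟩ hV₀.1.eigenvalues -
          (star u ⬝ᵥ (V - V₀).mulVec u).re ≤ 0) :
    V.rank ≤ 1 := by
  classical
  set lam : ℝ := Finset.univ.sup' ⟨⟨0, hm⟩, Finset.mem_univ _⟩ hV₀.1.eigenvalues with hlam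
  have hH := hV.1
  set μ : Fin m → ℝ := hH.eigenvalues with hμ
  have hμ0 : ∀ i, 0 ≤ μ i := fun i => hV.eigenvalues_nonneg i
  have hUU : star (hH.eigenvectorUnitary : Matrix (Fin m) (Fin m) ℂ) *
      (hH.eigenvectorUnitary : Matrix (Fin m) (Fin m) ℂ) = 1 :=
    (Matrix.mem_unitaryGroup_iff').mp hH.eigenvectorUnitary.2
  have hUU' : (hH.eigenvectorUnitary : Matrix (Fin m) (Fin m) ℂ) *
      star (hH.eigenvectorUnitary : Matrix (Fin m) (Fin m) ℂ) = 1 :=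
    (Matrix.mem_unitaryGroup_iff).mp hH.eigenvectorUnitary.2
  set w : Fin m → ℂ := star (hH.eigenvectorUnitary : Matrix (Fin m) (Fin m) ℂ) *ᵥ u with hw
  -- norm of u
  have husum : (∑ i, ‖u i‖ ^ 2) = 1 := by
    have h0 : (0:ℝ) ≤ ∑ i, ‖u i‖ ^ 2 :=
      Finset.sum_nonneg fun i _ => sq_nonneg _
    nlinarith [Real.sq_sqrt h0, hu_norm]
  have hdotu : star u ⬝ᵥ u = 1 := by
    rw [dot_self_eq, husum]; norm_num
  -- norms of w sum to 1
  have hdotw : star w ⬝ᵥ w = 1 := by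
    rw [hw, ← dot_aux, Matrix.mulVec_mulVec, hUU', Matrix.one_mulVec, hdotu]
  have hwsum : (∑ i, ‖w i‖ ^ 2) = 1 := by
    rw [dot_self_eq] at hdotw
    exact_mod_cast hdotw
  -- quadratic form of V
  have hq : (star u ⬝ᵥ V.mulVec u) = ((∑ i, μ i * ‖w i‖ ^ 2 : ℝ) : ℂ) := by
    conv_lhs => rw [hH.spectral_theorem, Unitary.conjStarAlgAut_apply]
    rw [← Matrix.mulVec_mulVec, ← Matrix.mulVec_mulVec, dot_aux, ← hw]
    simp only [dotProduct, Matrix.mulVec_diagonal, Function.comp_apply, Pi.star_apply,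
      Complex.ofReal_sum]
    refine Finset.sum_congr rfl fun i _ => ?_
    calc star (w i) * (RCLike.ofReal (μ i) * w i)
        = ((μ i : ℝ) : ℂ) * (w i * star (w i)) := by
          rw [show (RCLike.ofReal (μ i) : ℂ) = ((μ i : ℝ) : ℂ) from rfl]; ring
      _ = ((μ i * ‖w i‖ ^ 2 : ℝ) : ℂ) := by rw [mul_star_self_eq]; push_cast; ring
  -- trace of V
  have htr : (V.trace).re = ∑ i, μ i := by
    have : V.trace = ∑ i, ((μ i : ℝ) : ℂ) := by
      conv_lhs => rw [hH.spectral_theorem, Unitary.conjStarAlgAut_apply]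
      rw [Matrix.trace_mul_cycle, hUU, Matrix.one_mul, Matrix.trace_diagonal]
      simp [hμ]
    rw [this]
    simp
  -- quadratic form of V₀
  have hq0 : (star u ⬝ᵥ V₀.mulVec u) = (lam : ℂ) := by
    rw [hu_eig, dotProduct_smul, hdotu, smul_eq_mul, mul_one]
  -- rewrite the hypothesis
  have hkey : ∑ i, μ i ≤ ∑ i, μ i * ‖w i‖ ^ 2 := by
    have : (star u ⬝ᵥ (V - V₀).mulVec u).re = (∑ i, μ i * ‖w i‖ ^ 2) - lam := by
      rw [Matrix.sub_mulVec, dotProduct_sub, hq, hq0, Complex.sub_re,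
        Complex.ofReal_re, Complex.ofReal_re]
    rw [this, htr] at h
    linarith
  -- each term μ i * (1 - ‖w i‖²) = 0
  have hwle : ∀ i, ‖w i‖ ^ 2 ≤ 1 := by
    intro i
    rw [← hwsum]
    exact Finset.single_le_sum (f := fun k => ‖w k‖ ^ 2)
      (fun j _ => sq_nonneg _) (Finset.mem_univ i)
  have hterm : ∀ i ∈ Finset.univ, μ i * (1 - ‖w i‖ ^ 2) = 0 := by
    have hsum0 : ∑ i, μ i * (1 - ‖w i‖ ^ 2) = 0 := by
      have hle : ∑ i, μ i * (1 - ‖w i‖ ^ 2) ≤ 0 := by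
        have heq : ∑ i, μ i * (1 - ‖w i‖ ^ 2) = (∑ i, μ i) - ∑ i, μ i * ‖w i‖ ^ 2 := by
          rw [← Finset.sum_sub_distrib]
          refine Finset.sum_congr rfl fun i _ => by ring
        linarith
      have hge : (0:ℝ) ≤ ∑ i, μ i * (1 - ‖w i‖ ^ 2) :=
        Finset.sum_nonneg fun i _ => mul_nonneg (hμ0 i) (by linarith [hwle i])
      linarith
    exact (Finset.sum_eq_zero_iff_of_nonneg
      (fun i _ => mul_nonneg (hμ0 i) (by linarith [hwle i]))).mp hsum0
  -- conclude at most one nonzero eigenvalue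
  rw [hH.rank_eq_card_non_zero_eigs, Fintype.card_le_one_iff]
  rintro ⟨i, hi⟩ ⟨j, hj⟩
  by_contra hne
  have hij : i ≠ j := fun hh => hne (by simpa using hh)
  have hwi : ‖w i‖ ^ 2 = 1 := by
    have := hterm i (Finset.mem_univ i)
    rcases mul_eq_zero.mp this with h1 | h2
    · exact absurd h1 hi
    · linarith
  have hwj : ‖w j‖ ^ 2 = 1 := by
    have := hterm j (Finset.mem_univ j)
    rcases mul_eq_zero.mp this with h1 | h2
    · exact absurd h1 hj
    · linarith
  have hsub : ∑ k ∈ ({i, j} : Finset (Fin m)), ‖w k‖ ^ 2 ≤ ∑ k, ‖w k‖ ^ 2 :=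
    Finset.sum_le_sum_of_subset_of_nonneg (Finset.subset_univ _)
      (fun k _ _ => sq_nonneg _)
  rw [Finset.sum_pair hij, hwi, hwj, hwsum] at hsub
  linarith
end
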